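/- arXiv:1112.0769 — 3 statements merged into one kernel-verified Lean document; each statement's English description precedes it below -/
import Mathlib

section
/- Let λ be a partition with conjugate λ'. Then for all nonnegative integers a and b, λ'₁ + λ'₂ + ⋯ + λ'_a ≤ a·b + (λ_{b+1} + λ_{b+2} + ⋯), i.e. the number of boxes in the first a columns of λ is at most a·b plus the number of boxes of λ lying strictly below row b. -/
/-- **Inequality (2) of the paper.** For a partition `μ` and nonnegative integers
`a`, `b`, the number of boxes in the first `a` columns of `μ` is at most `a * b`
plus the number of boxes of `μ` lying strictly below row `b`.  In 1-indexed notation: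
`λ'₁ + ⋯ + λ'_a ≤ a·b + (λ_{b+1} + λ_{b+2} + ⋯)`. -/
theorem youngDiagram_first_cols_le_rect_add_lower_rows
    (μ : YoungDiagram) (a b : ℕ) :
    ∑ j ∈ Finset.range a, μ.colLen j ≤
      a * b + ∑ i ∈ Finset.Ico b (μ.colLen 0), μ.rowLen i := by
  have split : ∀ j ∈ Finset.range a,
      μ.colLen j = min (μ.colLen j) b + (μ.colLen j - b) := by
    intro j _; omega
  rw [Finset.sum_congr rfl split, Finset.sum_add_distrib]
  have h1 : ∑ j ∈ Finset.range a, min (μ.colLen j) b ≤ a * b := by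
    calc ∑ j ∈ Finset.range a, min (μ.colLen j) b
        ≤ ∑ j ∈ Finset.range a, b :=
          Finset.sum_le_sum fun j _ => min_le_right _ _
      _ = a * b := by simp [mul_comm]
  have h2 : ∑ j ∈ Finset.range a, (μ.colLen j - b) ≤
      ∑ i ∈ Finset.Ico b (μ.colLen 0), μ.rowLen i := by
    have step : ∀ j ∈ Finset.range a,
        μ.colLen j - b = ∑ i ∈ Finset.Ico b (μ.colLen 0),
          (if i < μ.colLen j then 1 else 0) := by
      intro j _
      have hle : μ.colLen j ≤ μ.colLen 0 := μ.colLen_anti 0 j (Nat.zero_le j)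
      rw [← Finset.sum_filter, Finset.sum_const, smul_eq_mul, mul_one]
      have : Finset.filter (fun i => i < μ.colLen j) (Finset.Ico b (μ.colLen 0))
          = Finset.Ico b (μ.colLen j) := by
        ext i
        simp only [Finset.mem_filter, Finset.mem_Ico]
        omega
      rw [this, Nat.card_Ico]
    rw [Finset.sum_congr rfl step, Finset.sum_comm]
    apply Finset.sum_le_sum
    intro i _
    calc ∑ j ∈ Finset.range a, (if i < μ.colLen j then 1 else 0)
        ≤ ∑ j ∈ Finset.range a, (if j < μ.rowLen i then 1 else 0) := by
          apply Finset.sum_le_sum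
          intro j _
          have : i < μ.colLen j ↔ j < μ.rowLen i := by
            rw [← μ.mem_iff_lt_colLen, ← μ.mem_iff_lt_rowLen]
          simp [this]
      _ ≤ μ.rowLen i := by
          rw [← Finset.sum_filter, Finset.sum_const, smul_eq_mul, mul_one]
          calc (Finset.filter (fun j => j < μ.rowLen i) (Finset.range a)).card
              ≤ (Finset.range (μ.rowLen i)).card := by
                apply Finset.card_le_card
                intro j hj
                simp only [Finset.mem_filter, Finset.mem_range] at *
                exact hj.2
            _ = μ.rowLen i := Finset.card_range _
  omega
end

section
/- Let λ, μ, ν be partitions with λ ⊆ ν (that is, λ_i ≤ ν_i for all i), and suppose there exists a Littlewood–Richardson filling of the skew diagram ν/λ of content μ; i.e. an assignment T of a positive integer to each box of ν that is not a box of λ such that: entries weakly increase from left to right along each row of ν/λ; entries strictly increase from top to bottom down each column of ν/λ; exactly μ_i boxes carry the entry i; and the reverse reading word of T (reading entries right to left in each row, from top row to bottom row) is a lattice word, meaning every initial segment contains at least as many occurrences of i as of i+1 for every i ≥ 1. Then for every positive integer k, ν₁ + ν₂ + ⋯ + ν_k ≤ (λ₁ + λ₂ + ⋯ + λ_k) +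 (μ₁ + μ₂ + ⋯ + μ_k). -/
/-- **Lemma 3.2 (Horn-type inequality via the Littlewood–Richardson rule).**
Let `lam ⊆ nu` be partitions (`lam_i ≤ nu_i` for all `i`) and suppose `T` is a
Littlewood–Richardson filling of the skew diagram `nu / lam` of content `mu`:
positive entries, rows weakly increasing, columns strictly increasing, exactly
`mu_k` entries equal to `k` for each `k ≥ 1`, and the reverse reading word (right
to left in each row, top to bottom) is a lattice word, i.e. every initial segment
contains at least as many `k`'s as `(k+1)`'s.  Then for every `k ≥ 1`,
`nu₁ + ⋯ + nu_k ≤ (lam₁ + ⋯ + lam_k) + (mu₁ + ⋯ + mu_k)`. -/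
theorem littlewoodRichardson_horn_inequality
    (lam mu nu : YoungDiagram)
    (hsub : ∀ i, lam.rowLen i ≤ nu.rowLen i)
    (T : ℕ × ℕ → ℕ)
    (hpos : ∀ x ∈ nu.cells \ lam.cells, 1 ≤ T x)
    (hrow : ∀ i j₁ j₂, (i, j₁) ∈ nu.cells \ lam.cells → (i, j₂) ∈ nu.cells \ lam.cells →
      j₁ ≤ j₂ → T (i, j₁) ≤ T (i, j₂))
    (hcol : ∀ i₁ i₂ j, (i₁, j) ∈ nu.cells \ lam.cells → (i₂, j) ∈ nu.cells \ lam.cells →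
      i₁ < i₂ → T (i₁, j) < T (i₂, j))
    (hcontent : ∀ k, 1 ≤ k →
      ((nu.cells \ lam.cells).filter (fun x => T x = k)).card = mu.rowLen (k - 1))
    (hlattice : ∀ r c k, 1 ≤ k →
      ((nu.cells \ lam.cells).filter
        (fun x => (x.1 < r ∨ (x.1 = r ∧ c ≤ x.2)) ∧ T x = k + 1)).card ≤
      ((nu.cells \ lam.cells).filter
        (fun x => (x.1 < r ∨ (x.1 = r ∧ c ≤ x.2)) ∧ T x = k)).card)
    (k : ℕ) (hk : 1 ≤ k) :
    ∑ i ∈ Finset.range k, nu.rowLen i ≤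
      (∑ i ∈ Finset.range k, lam.rowLen i) + ∑ i ∈ Finset.range k, mu.rowLen i := by
  classical
  set D := nu.cells \ lam.cells with hD
  -- Key fact: every entry in row i is at most i+1.
  have key : ∀ m, ∀ x ∈ D, T x = m → m ≤ x.1 + 1 := by
    intro m
    induction m using Nat.strong_induction_on with
    | _ m ih =>
      rintro ⟨i, j⟩ hx hT
      rcases Nat.lt_or_ge m 2 with hm | hm
      · omega
      · have h1 : 1 ≤ m - 1 := by omega
        have hlat := hlattice i j (m - 1) h1
        have hm1 : m - 1 + 1 = m := by omega
        rw [hm1] at hlat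
        have hmem : (i, j) ∈ D.filter (fun x => (x.1 < i ∨ (x.1 = i ∧ j ≤ x.2)) ∧ T x = m) := by
          simp [Finset.mem_filter, hx, hT]
        have hpos' : 0 < (D.filter (fun x => (x.1 < i ∨ (x.1 = i ∧ j ≤ x.2)) ∧ T x = m)).card :=
          Finset.card_pos.mpr ⟨_, hmem⟩
        have hpos2 : 0 < (D.filter
            (fun x => (x.1 < i ∨ (x.1 = i ∧ j ≤ x.2)) ∧ T x = m - 1)).card :=
          lt_of_lt_of_le hpos' hlat
        obtain ⟨⟨i', j'⟩, hy⟩ := Finset.card_pos.mp hpos2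
        simp only [Finset.mem_filter] at hy
        obtain ⟨hyD, hyreg, hyT⟩ := hy
        have hi' : i' < i := by
          rcases hyreg with h | ⟨he, hj⟩
          · exact h
          · subst he
            have := hrow i' j j' hx hyD hj
            omega
        have := ih (m - 1) (by omega) (i', j') hyD hyT
        omega
  set S := D.filter (fun x => x.1 < k) with hS
  -- card of each row-fiber of S
  have hfiber : ∀ i ∈ Finset.range k,
      (S.filter (fun x => x.1 = i)).card = nu.rowLen i - lam.rowLen i := by
    intro i _
    have : S.filter (fun x => x.1 = i) =
        (Finset.Ico (lam.rowLen i) (nu.rowLen i)).map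
          ⟨fun j => (i, j), fun a b h => by simpa using h⟩ := by
      ext ⟨a, b⟩
      simp only [hS, hD, Finset.mem_filter, Finset.mem_sdiff, Finset.mem_map,
        Finset.mem_Ico, Function.Embedding.coeFn_mk, YoungDiagram.mem_cells,
        YoungDiagram.mem_iff_lt_rowLen, Prod.mk.injEq]
      constructor
      · rintro ⟨⟨⟨h1, h2⟩, hk'⟩, rfl⟩
        exact ⟨b, ⟨by omega, h1⟩, rfl⟩
      · rintro ⟨c, ⟨hc1, hc2⟩, rfl, rfl⟩
        exact ⟨⟨⟨hc2, by omega⟩, Finset.mem_range.mp ‹i ∈ Finset.range k›⟩, rfl⟩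
    rw [this, Finset.card_map, Nat.card_Ico]
  have hcardS : S.card = ∑ i ∈ Finset.range k, (nu.rowLen i - lam.rowLen i) := by
    rw [Finset.card_eq_sum_card_fiberwise (f := Prod.fst) (t := Finset.range k)
      (fun x hx => by simp only [hS, Finset.mem_filter] at hx; exact Finset.mem_range.mpr (Finset.mem_filter.mp hx).2)]
    exact Finset.sum_congr rfl hfiber
  -- card S ≤ sum of mu
  have hcardS2 : S.card ≤ ∑ i ∈ Finset.range k, mu.rowLen i := by
    have hTmem : ∀ x ∈ S, T x ∈ Finset.Icc 1 k := by
      intro x hx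
      simp only [hS, Finset.mem_filter] at hx
      have h1 := hpos x hx.1
      have h2 := key (T x) x hx.1 rfl
      exact Finset.mem_Icc.mpr ⟨h1, by omega⟩
    rw [Finset.card_eq_sum_card_fiberwise hTmem]
    have step : ∀ m ∈ Finset.Icc 1 k,
        (S.filter (fun x => T x = m)).card ≤ mu.rowLen (m - 1) := by
      intro m hm
      rw [← hcontent m (Finset.mem_Icc.mp hm).1]
      apply Finset.card_le_card
      intro x hx
      simp only [hS, Finset.mem_filter] at hx ⊢
      exact ⟨hx.1.1, hx.2⟩
    calc ∑ m ∈ Finset.Icc 1 k, (S.filter (fun x => T x = m)).card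
        ≤ ∑ m ∈ Finset.Icc 1 k, mu.rowLen (m - 1) := Finset.sum_le_sum step
      _ = ∑ i ∈ Finset.range k, mu.rowLen i := by
          apply Finset.sum_nbij' (fun m => m - 1) (fun i => i + 1) <;>
            intros <;> simp_all [Finset.mem_Icc, Finset.mem_range] <;> omega
  have hle : ∑ i ∈ Finset.range k, nu.rowLen i ≤
      (∑ i ∈ Finset.range k, lam.rowLen i) +
        ∑ i ∈ Finset.range k, (nu.rowLen i - lam.rowLen i) := by
    rw [← Finset.sum_add_distrib]
    exact Finset.sum_le_sum fun i _ => by have := hsub i; omega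
  calc ∑ i ∈ Finset.range k, nu.rowLen i
      ≤ (∑ i ∈ Finset.range k, lam.rowLen i) +
          ∑ i ∈ Finset.range k, (nu.rowLen i - lam.rowLen i) := hle
    _ = (∑ i ∈ Finset.range k, lam.rowLen i) + S.card := by rw [hcardS]
    _ ≤ _ := by exact Nat.add_le_add_left hcardS2 _
end

section
/- Let Q = (Q₀, Q₁) be a finite quiver in which every vertex is either a source or a sink. Assign to every arrow a ∈ Q₁ a partition λ(a), to every source x a nonnegative integer γ_x, and to every sink y a nonnegative integer β_y. Suppose that for every source x there is a partition ν_x with ν_{x,1} + ⋯ + ν_{x,r} ≤ Σ_{a : ta = x} (λ(a)₁ + ⋯ + λ(a)_r) for all r ≥ 1, and for every sink y there is a partition μ_y with μ_{y,1} + ⋯ + μ_{y,r} ≤ Σ_{a : ha = y} (λ(a)'₁ + ⋯ + λ(a)'_r) for all r ≥ 1. Define u_x to be the largest nonnegative integer u with ν_{x,u} ≥ γ_x + u for each source x, and u_y the largest nonnegative integer u with μ_{y,u} ≥ β_y + u for each sink y (taking u = 0 when no such positive integer exists), and set N = Σ_{sources x} γ_x·u_x + Σ_{sinks y} β_y·u_y.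 Then Σ_{a ∈ Q₁} |λ(a)| − N ≥ Σ_{x ∈ Q₀} u_x² − Σ_{a ∈ Q₁} u_{ta}·u_{ha}. -/
open Finset

lemma filter_card_sum (s : Finset (ℕ × ℕ)) (f : ℕ × ℕ → ℕ) (p : ℕ) :
    (s.filter (fun c => f c < p)).card = ∑ i ∈ Finset.range p, (s.filter (fun c => f c = i)).card := by
  induction p with
  | zero => simp
  | succ p ih =>
    rw [Finset.sum_range_succ, ← ih, ← Finset.card_union_of_disjoint ?_, ← Finset.filter_or]
    · apply congrArg
      apply Finset.filter_congr
      intro c _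
      constructor <;> intro hc <;> omega
    · rw [Finset.disjoint_left]
      intro c hc hc'
      simp only [Finset.mem_filter] at hc hc'
      omega

lemma sum_rowLen_eq (μ : YoungDiagram) (p : ℕ) :
    ∑ i ∈ Finset.range p, μ.rowLen i = (μ.cells.filter (fun c => c.1 < p)).card := by
  rw [filter_card_sum μ.cells Prod.fst p]
  exact Finset.sum_congr rfl fun i _ => μ.rowLen_eq_card

lemma sum_colLen_eq (μ : YoungDiagram) (q : ℕ) :
    ∑ j ∈ Finset.range q, μ.colLen j = (μ.cells.filter (fun c => c.2 < q)).card := by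
  rw [filter_card_sum μ.cells Prod.snd q]
  exact Finset.sum_congr rfl fun j _ => μ.colLen_eq_card

lemma rowcol_le (μ : YoungDiagram) (p q : ℕ) :
    ∑ i ∈ Finset.range p, μ.rowLen i + ∑ j ∈ Finset.range q, μ.colLen j ≤ μ.card + p * q := by
  rw [sum_rowLen_eq, sum_colLen_eq]
  set Af := μ.cells.filter (fun c => c.1 < p) with hAf
  set Bf := μ.cells.filter (fun c => c.2 < q) with hBf
  have h1 : (Af ∪ Bf).card + (Af ∩ Bf).card = Af.card + Bf.card :=
    Finset.card_union_add_card_inter Af Bf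
  have h2 : (Af ∪ Bf).card ≤ μ.card := by
    apply Finset.card_le_card
    intro c hc
    rcases Finset.mem_union.mp hc with hc' | hc' <;>
      exact (Finset.mem_filter.mp hc').1
  have h3 : (Af ∩ Bf).card ≤ p * q := by
    calc (Af ∩ Bf).card ≤ (Finset.range p ×ˢ Finset.range q).card := by
          apply Finset.card_le_card
          intro c hc
          rw [Finset.mem_inter] at hc
          have := Finset.mem_filter.mp hc.1
          have := Finset.mem_filter.mp hc.2
          simp only [Finset.mem_product, Finset.mem_range]
          omega
      _ = p * q := by simp
  omega

lemma mul_le_sum_rowLen (μ : YoungDiagram) (m v : ℕ) (hv : 1 ≤ v) (hm : m ≤ μ.rowLen (v - 1)) :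
    v * m ≤ ∑ i ∈ Finset.range v, μ.rowLen i := by
  calc v * m = ∑ _i ∈ Finset.range v, m := by simp [mul_comm]
    _ ≤ _ := by
        apply Finset.sum_le_sum
        intro i hi
        rw [Finset.mem_range] at hi
        exact hm.trans (μ.rowLen_anti i (v - 1) (by omega))

/-- **Theorem 3.3 of the paper (combinatorial form).**  Let `Q` be a finite quiver
(vertices `V`, arrows `A`, tail `t`, head `h`) in which every vertex is a source
(no incoming arrows) or a sink (no outgoing arrows).  Assign a partition `lam a`
to every arrow, a nonnegative integer `γ x` to every source and `β y` to every
sink.  Suppose for every source `x` there is a partition `ν x` whose partial sums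
are dominated by the corresponding sums of row lengths of the partitions on the
arrows leaving `x`, and for every sink `y` a partition `μ y` whose partial sums
are dominated by the sums of column lengths (conjugate parts) of the partitions
on the arrows entering `y`.  Let `u x` be the largest nonnegative integer `u`
with `ν x_u ≥ γ x + u` at sources (resp. `μ y_u ≥ β y + u` at sinks), taken `0`
when no positive such integer exists, and set
`N = Σ_{sources x} γ x · u x + Σ_{sinks y} β y · u y`.  Then
`Σ_a |lam a| − N ≥ Σ_x (u x)² − Σ_a u (t a) · u (h a)` (the Euler form of `Q` at `u`). -/
theorem quiver_resolution_degree_inequality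
    {V A : Type*} [Fintype V] [Fintype A] [DecidableEq V]
    (t h : A → V)
    (hsrcsink : ∀ v : V, (∀ a : A, h a ≠ v) ∨ (∀ a : A, t a ≠ v))
    (lam : A → YoungDiagram) (γ β : V → ℕ) (ν μ : V → YoungDiagram) (u : V → ℕ)
    (hν : ∀ x : V, (∀ a : A, h a ≠ x) → ∀ r, 1 ≤ r →
      ∑ i ∈ Finset.range r, (ν x).rowLen i ≤
        ∑ a ∈ univ.filter (fun a => t a = x), ∑ i ∈ Finset.range r, (lam a).rowLen i)
    (hμ : ∀ y : V, (∀ a : A, t a ≠ y) → ∀ r, 1 ≤ r →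
      ∑ i ∈ Finset.range r, (μ y).rowLen i ≤
        ∑ a ∈ univ.filter (fun a => h a = y), ∑ i ∈ Finset.range r, (lam a).colLen i)
    (huSource : ∀ x : V, (∀ a : A, h a ≠ x) →
      (u x = 0 ∨ γ x + u x ≤ (ν x).rowLen (u x - 1)) ∧
        ∀ v, u x < v → (ν x).rowLen (v - 1) < γ x + v)
    (huSink : ∀ y : V, (∀ a : A, t a ≠ y) →
      (u y = 0 ∨ β y + u y ≤ (μ y).rowLen (u y - 1)) ∧
        ∀ v, u y < v → (μ y).rowLen (v - 1) < β y + v) :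
    (∑ x : V, (u x : ℤ) ^ 2) - ∑ a : A, (u (t a) : ℤ) * (u (h a) : ℤ) ≤
      (∑ a : A, ((lam a).card : ℤ)) -
        ((∑ x ∈ univ.filter (fun x : V => ∀ a : A, h a ≠ x), (γ x : ℤ) * (u x : ℤ)) +
         (∑ y ∈ univ.filter (fun y : V => ∀ a : A, t a ≠ y), (β y : ℤ) * (u y : ℤ))) := by
  
  classical
  set S := univ.filter (fun x : V => ∀ a : A, h a ≠ x) with hS
  set T := univ.filter (fun y : V => ∀ a : A, t a ≠ y) with hT
  -- every vertex is in S or T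
  have hcover : (univ : Finset V) = S ∪ T := by
    ext x
    simp only [hS, hT, Finset.mem_union, Finset.mem_filter, Finset.mem_univ, true_and,
      iff_true]
    exact iff_of_true trivial (hsrcsink x)
  -- tails are sources, heads are sinks
  have htail : ∀ a : A, t a ∈ S := by
    intro a
    simp only [hS, Finset.mem_filter, Finset.mem_univ, true_and]
    rcases hsrcsink (t a) with hsrc | hsnk
    · exact hsrc
    · exact absurd rfl (hsnk a)
  have hhead : ∀ a : A, h a ∈ T := by
    intro a
    simp only [hT, Finset.mem_filter, Finset.mem_univ, true_and]
    rcases hsrcsink (h a) with hsrc | hsnk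
    · exact absurd rfl (hsrc a)
    · exact hsnk
  -- source-side estimate
  have hSrcEst : ∀ x ∈ S, u x * (γ x + u x) ≤
      ∑ a ∈ univ.filter (fun a => t a = x), ∑ i ∈ Finset.range (u x), (lam a).rowLen i := by
    intro x hx
    simp only [hS, Finset.mem_filter, Finset.mem_univ, true_and] at hx
    by_cases h0 : u x = 0
    · simp [h0]
    · have h1u : 1 ≤ u x := Nat.one_le_iff_ne_zero.mpr h0
      obtain ⟨hrw, _⟩ := huSource x hx
      rcases hrw with h' | h'
      · exact absurd h' h0
      · calc u x * (γ x + u x) ≤ ∑ i ∈ Finset.range (u x), (ν x).rowLen i :=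
              mul_le_sum_rowLen (ν x) _ _ h1u h'
          _ ≤ _ := hν x hx (u x) h1u
  have hSnkEst : ∀ y ∈ T, u y * (β y + u y) ≤
      ∑ a ∈ univ.filter (fun a => h a = y), ∑ i ∈ Finset.range (u y), (lam a).colLen i := by
    intro y hy
    simp only [hT, Finset.mem_filter, Finset.mem_univ, true_and] at hy
    by_cases h0 : u y = 0
    · simp [h0]
    · have h1u : 1 ≤ u y := Nat.one_le_iff_ne_zero.mpr h0
      obtain ⟨hrw, _⟩ := huSink y hy
      rcases hrw with h' | h'
      · exact absurd h' h0
      · calc u y * (β y + u y) ≤ ∑ i ∈ Finset.range (u y), (μ y).rowLen i :=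
              mul_le_sum_rowLen (μ y) _ _ h1u h'
          _ ≤ _ := hμ y hy (u y) h1u
  -- sum over sources, regrouped over arrows
  have hSsum : ∑ x ∈ S, u x * (γ x + u x) ≤
      ∑ a : A, ∑ i ∈ Finset.range (u (t a)), (lam a).rowLen i := by
    calc ∑ x ∈ S, u x * (γ x + u x)
        ≤ ∑ x ∈ S, ∑ a ∈ univ.filter (fun a => t a = x),
            ∑ i ∈ Finset.range (u x), (lam a).rowLen i := Finset.sum_le_sum hSrcEst
      _ = ∑ x ∈ S, ∑ a ∈ univ.filter (fun a => t a = x),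
            ∑ i ∈ Finset.range (u (t a)), (lam a).rowLen i := by
          refine Finset.sum_congr rfl fun x _ => Finset.sum_congr rfl fun a ha => ?_
          rw [Finset.mem_filter] at ha
          rw [ha.2]
      _ = ∑ a : A, ∑ i ∈ Finset.range (u (t a)), (lam a).rowLen i :=
          Finset.sum_fiberwise_of_maps_to (fun a _ => htail a) _
  have hTsum : ∑ y ∈ T, u y * (β y + u y) ≤
      ∑ a : A, ∑ i ∈ Finset.range (u (h a)), (lam a).colLen i := by
    calc ∑ y ∈ T, u y * (β y + u y)
        ≤ ∑ y ∈ T, ∑ a ∈ univ.filter (fun a => h a = y),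
            ∑ i ∈ Finset.range (u y), (lam a).colLen i := Finset.sum_le_sum hSnkEst
      _ = ∑ y ∈ T, ∑ a ∈ univ.filter (fun a => h a = y),
            ∑ i ∈ Finset.range (u (h a)), (lam a).colLen i := by
          refine Finset.sum_congr rfl fun y _ => Finset.sum_congr rfl fun a ha => ?_
          rw [Finset.mem_filter] at ha
          rw [ha.2]
      _ = ∑ a : A, ∑ i ∈ Finset.range (u (h a)), (lam a).colLen i :=
          Finset.sum_fiberwise_of_maps_to (fun a _ => hhead a) _
  -- per-arrow bound
  have hArrow : ∑ a : A, ∑ i ∈ Finset.range (u (t a)), (lam a).rowLen i +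
      ∑ a : A, ∑ i ∈ Finset.range (u (h a)), (lam a).colLen i ≤
      ∑ a : A, (lam a).card + ∑ a : A, u (t a) * u (h a) := by
    rw [← Finset.sum_add_distrib, ← Finset.sum_add_distrib]
    exact Finset.sum_le_sum fun a _ => rowcol_le (lam a) (u (t a)) (u (h a))
  -- squares split over S and T
  have hsq : ∑ x : V, u x ^ 2 ≤ ∑ x ∈ S, u x ^ 2 + ∑ x ∈ T, u x ^ 2 := by
    have := Finset.sum_union_inter (s₁ := S) (s₂ := T) (f := fun x => u x ^ 2)
    rw [← hcover] at this
    omega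
  -- the natural-number inequality
  have key : ∑ x : V, u x ^ 2 + (∑ x ∈ S, γ x * u x + ∑ y ∈ T, β y * u y) ≤
      ∑ a : A, (lam a).card + ∑ a : A, u (t a) * u (h a) := by
    have e1 : ∑ x ∈ S, u x * (γ x + u x) = ∑ x ∈ S, γ x * u x + ∑ x ∈ S, u x ^ 2 := by
      rw [← Finset.sum_add_distrib]
      exact Finset.sum_congr rfl fun x _ => by ring
    have e2 : ∑ y ∈ T, u y * (β y + u y) = ∑ y ∈ T, β y * u y + ∑ y ∈ T, u y ^ 2 := by
      rw [← Finset.sum_add_distrib]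
      exact Finset.sum_congr rfl fun y _ => by ring
    omega
  have keyZ := Nat.cast_le (α := ℤ) |>.mpr key
  push_cast at keyZ
  linarith
end
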